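/- For the Clifford torus in ℂPⁿ, the superpotential 𝒫(z₁,…,zₙ) = z₁ + ⋯ + zₙ + 1/(z₁⋯zₙ) on (ℂ*)ⁿ has exactly n+1 critical points, namely the points (z,…,z) with z^{n+1} = 1, and each critical point is nondegenerate (the holomorphic Hessian is invertible there). -/

import Mathlib

/-- The Clifford-torus superpotential `𝒫(z) = z₁ + ⋯ + zₙ + 1/(z₁⋯zₙ)`. -/
noncomputable def cliffordPotential (n : ℕ) : (Fin n → ℂ) → ℂ :=
  fun z => (∑ i, z i) + (∏ i, z i)⁻¹

/-- The `i`-th partial derivative of a function of `n` complex variables. -/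
noncomputable def partialDeriv (n : ℕ) (f : (Fin n → ℂ) → ℂ) (i : Fin n)
    (z : Fin n → ℂ) : ℂ :=
  deriv (fun w => f (Function.update z i w)) (z i)

/-- The holomorphic Hessian matrix of a function of `n` complex variables. -/
noncomputable def hessian (n : ℕ) (f : (Fin n → ℂ) → ℂ) (z : Fin n → ℂ) :
    Matrix (Fin n) (Fin n) ℂ :=
  Matrix.of fun i j => partialDeriv n (partialDeriv n f j) i z

lemma pd_formula (n : ℕ) (z : Fin n → ℂ) (hz : ∀ i, z i ≠ 0) (i : Fin n) :
    partialDeriv n (cliffordPotential n) i z = 1 - ((∏ j, z j) * z i)⁻¹ := by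
  classical
  set P := ∏ j ∈ Finset.univ.erase i, z j with hPdef
  have hP : P ≠ 0 := Finset.prod_ne_zero_iff.2 fun j _ => hz j
  have hprod : (∏ j, z j) = z i * P := (Finset.mul_prod_erase _ _ (Finset.mem_univ i)).symm
  have hfun : (fun w => cliffordPotential n (Function.update z i w))
      = fun w => (w + ∑ j ∈ Finset.univ \ {i}, z j) + (w * ∏ j ∈ Finset.univ \ {i}, z j)⁻¹ := by
    funext w
    simp only [cliffordPotential, Finset.sum_update_of_mem (Finset.mem_univ i),
      Finset.prod_update_of_mem (Finset.mem_univ i)]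
  have hP' : (∏ j ∈ Finset.univ \ {i}, z j) = P := by rw [hPdef, Finset.erase_eq]
  have hd : HasDerivAt (fun w : ℂ => (w + ∑ j ∈ Finset.univ \ {i}, z j)
      + (w * ∏ j ∈ Finset.univ \ {i}, z j)⁻¹)
      (1 + (-(1 * P) / (z i * P) ^ 2)) (z i) := by
    rw [hP']
    exact ((hasDerivAt_id (z i)).add_const _).add
      (((hasDerivAt_id (z i)).mul_const P).inv (mul_ne_zero (hz i) hP))
  rw [partialDeriv, hfun, hd.deriv, hprod]
  have hB : (z i * P) ^ 2 ≠ 0 := pow_ne_zero _ (mul_ne_zero (hz i) hP)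
  have hD : z i * P * z i ≠ 0 := mul_ne_zero (mul_ne_zero (hz i) hP) (hz i)
  have key : (1 * P) / (z i * P) ^ 2 = 1 / (z i * P * z i) := by
    rw [div_eq_div_iff hB hD]; ring
  rw [neg_div, key, inv_eq_one_div, ← sub_eq_add_neg]

lemma pd2_formula (n : ℕ) (z : Fin n → ℂ) (hz : ∀ i, z i ≠ 0) (i j : Fin n) :
    partialDeriv n (partialDeriv n (cliffordPotential n) j) i z
      = ((∏ k, z k) * z i * z j)⁻¹ * (1 + if i = j then 1 else 0) := by
  classical
  set P := ∏ k ∈ Finset.univ.erase i, z k with hPdef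
  have hP : P ≠ 0 := Finset.prod_ne_zero_iff.2 fun k _ => hz k
  have hprod : (∏ k, z k) = z i * P := (Finset.mul_prod_erase _ _ (Finset.mem_univ i)).symm
  have heq : (fun w => partialDeriv n (cliffordPotential n) j (Function.update z i w))
      =ᶠ[nhds (z i)]
      (fun w => 1 - ((w * P) * Function.update z i w j)⁻¹) := by
    filter_upwards [isOpen_ne.mem_nhds (hz i)] with w hw
    have hz' : ∀ k, Function.update z i w k ≠ 0 := by
      intro k
      rcases eq_or_ne k i with rfl | hk
      · simpa using hw
      · simpa [Function.update_of_ne hk] using hz k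
    rw [pd_formula n _ hz' j]
    rw [show (∏ k, Function.update z i w k) = w * P from by
      rw [Finset.prod_update_of_mem (Finset.mem_univ i), hPdef, Finset.erase_eq]]
  rw [partialDeriv, heq.deriv_eq]
  rcases eq_or_ne i j with rfl | hij
  · have hd : HasDerivAt (fun w : ℂ => 1 - ((w * P) * Function.update z i w i)⁻¹)
        (0 - (-((1 * P) * z i + (z i * P) * 1) / ((z i * P) * z i) ^ 2)) (z i) := by
      have hupd : (fun w : ℂ => 1 - ((w * P) * Function.update z i w i)⁻¹)
          = fun w : ℂ => 1 - ((w * P) * w)⁻¹ := by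
        funext w; rw [Function.update_self]
      rw [hupd]
      exact (hasDerivAt_const (z i) (1:ℂ)).sub
        ((((hasDerivAt_id (z i)).mul_const P).mul (hasDerivAt_id (z i))).inv
          (mul_ne_zero (mul_ne_zero (hz i) hP) (hz i)))
    rw [hd.deriv, hprod, if_pos rfl]
    have hB : ((z i * P) * z i) ^ 2 ≠ 0 :=
      pow_ne_zero _ (mul_ne_zero (mul_ne_zero (hz i) hP) (hz i))
    have hD : z i * P * z i * z i ≠ 0 :=
      mul_ne_zero (mul_ne_zero (mul_ne_zero (hz i) hP) (hz i)) (hz i)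
    have key : ((1 * P) * z i + (z i * P) * 1) / ((z i * P) * z i) ^ 2
        = (1 + 1) / (z i * P * z i * z i) := by
      rw [div_eq_div_iff hB hD]; ring
    rw [zero_sub, neg_div, neg_neg, key, inv_mul_eq_div]
  · have hd : HasDerivAt (fun w : ℂ => 1 - ((w * P) * Function.update z i w j)⁻¹)
        (0 - (-((1 * P) * z j) / ((z i * P) * z j) ^ 2)) (z i) := by
      have hupd : (fun w : ℂ => 1 - ((w * P) * Function.update z i w j)⁻¹)
          = fun w : ℂ => 1 - ((w * P) * z j)⁻¹ := by
        funext w; rw [Function.update_of_ne (Ne.symm hij)]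
      rw [hupd]
      exact (hasDerivAt_const (z i) (1:ℂ)).sub
        ((((hasDerivAt_id (z i)).mul_const P).mul_const (z j)).inv
          (mul_ne_zero (mul_ne_zero (hz i) hP) (hz j)))
    rw [hd.deriv, hprod, if_neg hij]
    have hB : ((z i * P) * z j) ^ 2 ≠ 0 :=
      pow_ne_zero _ (mul_ne_zero (mul_ne_zero (hz i) hP) (hz j))
    have hD : z i * P * z i * z j ≠ 0 :=
      mul_ne_zero (mul_ne_zero (mul_ne_zero (hz i) hP) (hz i)) (hz j)
    have key : (1 * P) * z j / ((z i * P) * z j) ^ 2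
        = (1 + 0) / (z i * P * z i * z j) := by
      rw [div_eq_div_iff hB hD]; ring
    rw [zero_sub, neg_div, neg_neg, key, inv_mul_eq_div]

lemma crit_iff (n : ℕ) (z : Fin n → ℂ) (hz : ∀ i, z i ≠ 0) :
    (∀ i, partialDeriv n (cliffordPotential n) i z = 0) ↔
      ∃ c : ℂ, c ^ (n + 1) = 1 ∧ ∀ i, z i = c := by
  have hprodne : (∏ k, z k) ≠ 0 := Finset.prod_ne_zero_iff.2 fun k _ => hz k
  constructor
  · intro h
    have h1 : ∀ i, (∏ k, z k) * z i = 1 := by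
      intro i
      have := h i
      rw [pd_formula n z hz i, sub_eq_zero] at this
      exact inv_eq_one.mp this.symm
    refine ⟨(∏ k, z k)⁻¹, ?_, fun i => (inv_eq_of_mul_eq_one_right (h1 i)).symm⟩
    have hc : ∀ i, z i = (∏ k, z k)⁻¹ := fun i => (inv_eq_of_mul_eq_one_right (h1 i)).symm
    have h2 : (∏ k, z k) = (∏ k, z k)⁻¹ ^ n := by
      calc (∏ k, z k) = ∏ _k : Fin n, (∏ k, z k)⁻¹ := Finset.prod_congr rfl fun k _ => hc k
        _ = (∏ k, z k)⁻¹ ^ n := by rw [Finset.prod_const, Finset.card_univ, Fintype.card_fin]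
    rw [pow_succ, ← h2]
    exact mul_inv_cancel₀ hprodne
  · rintro ⟨c, hc, hzc⟩
    have hc0 : c ≠ 0 := by
      intro h0; rw [h0, zero_pow (Nat.succ_ne_zero n)] at hc; exact zero_ne_one hc
    have h2 : (∏ k, z k) = c ^ n := by
      calc (∏ k, z k) = ∏ _k : Fin n, c := Finset.prod_congr rfl fun k _ => hzc k
        _ = c ^ n := by rw [Finset.prod_const, Finset.card_univ, Fintype.card_fin]
    intro i
    rw [pd_formula n z hz i, h2, hzc i, ← pow_succ, hc, inv_one, sub_self]

/-- The superpotential `𝒫(z₁,…,zₙ) = z₁ + ⋯ + zₙ + 1/(z₁⋯zₙ)` of the Clifford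
torus in `ℂPⁿ` has exactly the `n+1` critical points `(z,…,z)` with `z^(n+1) = 1`
in `(ℂ*)ⁿ`, and each of them is nondegenerate. -/
theorem stmt_4 (n : ℕ) (hn : 1 ≤ n) :
    (∀ z : Fin n → ℂ, (∀ i, z i ≠ 0) →
        ((∀ i, partialDeriv n (cliffordPotential n) i z = 0) ↔
          ∃ c : ℂ, c ^ (n + 1) = 1 ∧ ∀ i, z i = c)) ∧
    (∀ z : Fin n → ℂ, (∀ i, z i ≠ 0) →
        (∀ i, partialDeriv n (cliffordPotential n) i z = 0) →
        IsUnit (hessian n (cliffordPotential n) z).det) ∧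
    Set.ncard {z : Fin n → ℂ |
        (∀ i, z i ≠ 0) ∧ ∀ i, partialDeriv n (cliffordPotential n) i z = 0} =
      n + 1 := by
  refine ⟨fun z hz => crit_iff n z hz, ?_, ?_⟩
  · intro z hz hcrit
    obtain ⟨c, hc, hzc⟩ := (crit_iff n z hz).mp hcrit
    have hc0 : c ≠ 0 := by
      intro h0; rw [h0, zero_pow (Nat.succ_ne_zero n)] at hc; exact zero_ne_one hc
    have h2 : (∏ k, z k) = c ^ n := by
      calc (∏ k, z k) = ∏ _k : Fin n, c := Finset.prod_congr rfl fun k _ => hzc k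
        _ = c ^ n := by rw [Finset.prod_const, Finset.card_univ, Fintype.card_fin]
    have hH : hessian n (cliffordPotential n) z
        = c⁻¹ • (1 + Matrix.replicateCol Unit (fun _ => (1:ℂ)) * Matrix.replicateRow Unit (fun _ => (1:ℂ))) := by
      ext i j
      rw [hessian, Matrix.of_apply, pd2_formula n z hz i j, h2, hzc i, hzc j]
      have hcn : (c ^ n * c * c)⁻¹ = c⁻¹ := by
        rw [show c ^ n * c * c = c ^ (n+1) * c from by rw [pow_succ], hc, one_mul]
      rw [hcn]
      rcases eq_or_ne i j with rfl | hij
      · simp [Matrix.one_apply, Matrix.mul_apply, Matrix.smul_apply, Matrix.add_apply,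
          smul_eq_mul]
        try ring
      · simp [Matrix.one_apply, Matrix.mul_apply, Matrix.smul_apply, Matrix.add_apply,
          smul_eq_mul, hij]
        try ring
    rw [hH, Matrix.det_smul, Matrix.det_one_add_replicateCol_mul_replicateRow]
    have hdot : dotProduct (fun _ : Fin n => (1:ℂ)) (fun _ => (1:ℂ)) = (n : ℂ) := by
      simp [dotProduct]
    rw [hdot]
    refine (isUnit_iff_ne_zero).2 (mul_ne_zero (pow_ne_zero _ (inv_ne_zero hc0)) ?_)
    have : ((1 : ℂ) + n) = ((n+1 : ℕ) : ℂ) := by push_cast; ring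
    rw [this]
    exact Nat.cast_ne_zero.2 (Nat.succ_ne_zero n)
  · have hset : {z : Fin n → ℂ |
        (∀ i, z i ≠ 0) ∧ ∀ i, partialDeriv n (cliffordPotential n) i z = 0}
        = (fun c : ℂ => (fun _ : Fin n => c)) '' {c : ℂ | c ^ (n+1) = 1} := by
      ext z
      simp only [Set.mem_setOf_eq, Set.mem_image]
      constructor
      · rintro ⟨hz, hcrit⟩
        obtain ⟨c, hc, hzc⟩ := (crit_iff n z hz).mp hcrit
        exact ⟨c, hc, (funext hzc).symm⟩
      · rintro ⟨c, hc, rfl⟩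
        have hc0 : c ≠ 0 := by
          intro h0; rw [h0, zero_pow (Nat.succ_ne_zero n)] at hc; exact zero_ne_one hc
        exact ⟨fun _ => hc0, (crit_iff n _ fun _ => hc0).mpr ⟨c, hc, fun _ => rfl⟩⟩
    have hinj : Function.Injective (fun c : ℂ => (fun _ : Fin n => c)) := by
      intro a b h
      exact congrFun h ⟨0, hn⟩
    rw [hset, Set.ncard_image_of_injective _ hinj]
    have hroots : {c : ℂ | c ^ (n+1) = 1}
        = ↑(Polynomial.nthRootsFinset (n+1) (1 : ℂ)) := by
      ext x
      rw [Set.mem_setOf_eq, Finset.mem_coe, Polynomial.mem_nthRootsFinset (Nat.succ_pos n) (1 : ℂ)]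
    rw [hroots, Set.ncard_coe_finset]
    exact (Complex.isPrimitiveRoot_exp (n+1) (Nat.succ_ne_zero n)).card_nthRootsFinset
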